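/- Let G be an LWF chain graph with vertex set V and let P be a joint probability distribution over random variables indexed by V that satisfies the global Markov property with respect to G and is faithful to G. Then for every T ∈ V, Mb(T) is the unique inclusion-minimal set S ⊆ V∖{T} such that, under P, the variable T is conditionally independent of the variables V∖({T}∪S) given the variables S. -/

import Mathlib

/- Formalization of LWF chain graphs, routes, sections, c-separation,
   minimal complexes, Markov blankets, moral graphs, and ancestral sets. -/

namespace LWF

/-- An LWF chain graph: a mixed graph with directed edges `dir` and (symmetric)
undirected edges `undir`, no loops, no pair of vertices joined by more than one
edge, and no partially directed cycles. -/
structure ChainGraph (V : Type*) where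
  dir : V → V → Prop
  undir : V → V → Prop
  undir_symm : ∀ u v, undir u v → undir v u
  dir_irrefl : ∀ v, ¬ dir v v
  undir_irrefl : ∀ v, ¬ undir v v
  dir_asymm : ∀ u v, dir u v → ¬ dir v u
  dir_not_undir : ∀ u v, dir u v → ¬ undir u v
  /-- No partially directed cycle: there is no sequence `ρ 0, …, ρ n` (`n ≥ 2`)
  with `ρ n = ρ 0`, the vertices `ρ 0, …, ρ (n-1)` distinct, every consecutive
  pair joined by `dir` or `undir` (in the forward direction), and at least one
  forward directed edge on it. -/
  no_partially_directed_cycle :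
    ∀ (n : ℕ) (ρ : ℕ → V), 2 ≤ n → ρ n = ρ 0 →
      (∀ i j, i < j → j < n → ρ i ≠ ρ j) →
      (∀ i, i < n → dir (ρ i) (ρ (i+1)) ∨ undir (ρ i) (ρ (i+1))) →
      ¬ ∃ i, i < n ∧ dir (ρ i) (ρ (i+1))

namespace ChainGraph

variable {V : Type*}

/-- Two vertices are adjacent if they are joined by a directed or an undirected edge. -/
def Adj (G : ChainGraph V) (u v : V) : Prop := G.dir u v ∨ G.dir v u ∨ G.undir u v

/-- A partially directed path from `u` to `w`: a sequence of distinct vertices,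
each consecutive pair joined by a forward directed or an undirected edge, with
at least one directed edge on it. -/
def PDPath (G : ChainGraph V) (u w : V) : Prop :=
  ∃ (n : ℕ) (ρ : ℕ → V), 1 ≤ n ∧ ρ 0 = u ∧ ρ n = w ∧
    (∀ i j, i ≤ n → j ≤ n → i ≠ j → ρ i ≠ ρ j) ∧
    (∀ i, i < n → G.dir (ρ i) (ρ (i+1)) ∨ G.undir (ρ i) (ρ (i+1))) ∧
    (∃ i, i < n ∧ G.dir (ρ i) (ρ (i+1)))

/-- `an(Z)`: the set of vertices having a partially directed path to some vertex of `Z`. -/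
def anc (G : ChainGraph V) (Z : Set V) : Set V := {x | ∃ z ∈ Z, G.PDPath x z}

/-- Parents of `v`. -/
def pa (G : ChainGraph V) (v : V) : Set V := {u | G.dir u v}

/-- Children of `v`. -/
def ch (G : ChainGraph V) (v : V) : Set V := {u | G.dir v u}

/-- Neighbours of `v`. -/
def nb (G : ChainGraph V) (v : V) : Set V := {u | G.undir u v}

/-- A minimal complex `a → ρ 1 − ⋯ − ρ n ← b` (with `ρ 0 = a`, `ρ (n+1) = b`,
`n ≥ 1`): all vertices distinct, the indicated edges present, and it is an
induced subgraph, i.e. the only adjacencies among its vertices are between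
consecutive ones (in particular `a` and `b` are non-adjacent). -/
def IsMinimalComplex (G : ChainGraph V) (a b : V) (n : ℕ) (ρ : ℕ → V) : Prop :=
  1 ≤ n ∧ ρ 0 = a ∧ ρ (n+1) = b ∧
  (∀ i j, i ≤ n+1 → j ≤ n+1 → i ≠ j → ρ i ≠ ρ j) ∧
  G.dir a (ρ 1) ∧ G.dir b (ρ n) ∧
  (∀ i, 1 ≤ i → i < n → G.undir (ρ i) (ρ (i+1))) ∧
  (∀ i j, i ≤ n+1 → j ≤ n+1 → G.Adj (ρ i) (ρ j) → j = i+1 ∨ i = j+1)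

/-- Complex-spouses of `a`. -/
def csp (G : ChainGraph V) (a : V) : Set V := {b | ∃ n ρ, G.IsMinimalComplex a b n ρ}

/-- The Markov blanket of `T`: parents, neighbours, children and complex-spouses of `T`. -/
def mb (G : ChainGraph V) (T : V) : Set V := G.pa T ∪ G.nb T ∪ G.ch T ∪ G.csp T

/-- A route in `G`: a sequence of `len + 1` vertices `vtx 0, …, vtx len`
(hence nonempty), each consecutive pair joined by an edge of `G`. -/
structure Route (G : ChainGraph V) where
  len : ℕ
  vtx : ℕ → V
  link : ∀ i, i < len → G.Adj (vtx i) (vtx (i+1))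

/-- The positions `a, …, b` of the route form a section: all steps inside are
undirected edges, and the run is maximal on both sides. -/
def Route.IsSection {G : ChainGraph V} (ω : Route G) (a b : ℕ) : Prop :=
  a ≤ b ∧ b ≤ ω.len ∧
  (∀ k, a ≤ k → k < b → G.undir (ω.vtx k) (ω.vtx (k+1))) ∧
  (0 < a → ¬ G.undir (ω.vtx (a-1)) (ω.vtx a)) ∧
  (b < ω.len → ¬ G.undir (ω.vtx b) (ω.vtx (b+1)))

/-- A collider section: a section which the route enters by an arrowhead at both
ends, i.e. `vtx (a-1) → vtx a − ⋯ − vtx b ← vtx (b+1)` occurs on the route. -/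
def Route.IsColliderSection {G : ChainGraph V} (ω : Route G) (a b : ℕ) : Prop :=
  ω.IsSection a b ∧ 0 < a ∧ b < ω.len ∧
  G.dir (ω.vtx (a-1)) (ω.vtx a) ∧ G.dir (ω.vtx (b+1)) (ω.vtx b)

/-- A route is active with respect to `Z` if every collider section of it
contains a vertex of `Z ∪ an(Z)` and no vertex of any non-collider section is in `Z`. -/
def Route.Active {G : ChainGraph V} (ω : Route G) (Z : Set V) : Prop :=
  (∀ a b, ω.IsColliderSection a b → ∃ k, a ≤ k ∧ k ≤ b ∧ ω.vtx k ∈ Z ∪ G.anc Z) ∧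
  (∀ a b, ω.IsSection a b → ¬ ω.IsColliderSection a b →
    ∀ k, a ≤ k → k ≤ b → ω.vtx k ∉ Z)

/-- A route is intercepted (blocked) by `Z` if it is not active with respect to `Z`. -/
def Route.Intercepted {G : ChainGraph V} (ω : Route G) (Z : Set V) : Prop :=
  ¬ ω.Active Z

/-- `X` and `Y` are c-separated given `Z`: every route between a vertex of `X`
and a vertex of `Y` is intercepted by `Z`. -/
def CSep (G : ChainGraph V) (X Y Z : Set V) : Prop :=
  ∀ ω : Route G,
    ((ω.vtx 0 ∈ X ∧ ω.vtx ω.len ∈ Y) ∨ (ω.vtx 0 ∈ Y ∧ ω.vtx ω.len ∈ X)) →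
    ω.Intercepted Z

/-- Moral graph adjacency: distinct `u`, `v` are adjacent in `G^m` iff they are
adjacent in `G` or are complex-spouses. -/
def MoralAdj (G : ChainGraph V) (u v : V) : Prop :=
  u ≠ v ∧ (G.dir u v ∨ G.dir v u ∨ G.undir u v ∨ u ∈ G.csp v ∨ v ∈ G.csp u)

/-- A set `A` is ancestral if it contains the boundary (parents and neighbours)
of each of its elements. -/
def Ancestral (G : ChainGraph V) (A : Set V) : Prop :=
  ∀ a ∈ A, ∀ u, (G.dir u a ∨ G.undir u a) → u ∈ A

/-- `An(A)`: the smallest ancestral set containing `A`. -/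
def An (G : ChainGraph V) (A : Set V) : Set V :=
  ⋂₀ {B : Set V | A ⊆ B ∧ G.Ancestral B}

/-- A minimal complex of the induced subgraph `G_A`: a minimal complex of `G`
all of whose vertices lie in `A`. -/
def IsMinimalComplexIn (G : ChainGraph V) (A : Set V) (a b : V) (n : ℕ) (ρ : ℕ → V) : Prop :=
  G.IsMinimalComplex a b n ρ ∧ ∀ i, i ≤ n+1 → ρ i ∈ A

/-- Adjacency in the moral graph `(G_A)^m` of the induced subgraph of `G` on `A`:
distinct `u, v ∈ A` joined by an edge of `G`, or complex-spouses in `G_A`. -/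
def MoralAdjIn (G : ChainGraph V) (A : Set V) (u v : V) : Prop :=
  u ∈ A ∧ v ∈ A ∧ u ≠ v ∧
    (G.dir u v ∨ G.dir v u ∨ G.undir u v ∨
      (∃ n ρ, G.IsMinimalComplexIn A u v n ρ) ∨ (∃ n ρ, G.IsMinimalComplexIn A v u n ρ))

end ChainGraph

/-- A path from `u` to `v` in an undirected graph with adjacency relation `R`:
a sequence of `n + 1 ≥ 2` distinct vertices `ρ 0 = u, …, ρ n = v` with each
consecutive pair adjacent. -/
def UPath {V : Type*} (R : V → V → Prop) (u v : V) (n : ℕ) (ρ : ℕ → V) : Prop :=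
  1 ≤ n ∧ ρ 0 = u ∧ ρ n = v ∧
  (∀ i j, i ≤ n → j ≤ n → i ≠ j → ρ i ≠ ρ j) ∧
  (∀ i, i < n → R (ρ i) (ρ (i+1)))

end LWF

namespace LWF

namespace ChainGraph

variable {V : Type*} (G : ChainGraph V)

lemma undir_symm'' {u v : V} (h : G.undir u v) : G.undir v u := G.undir_symm u v h

lemma not_undir_rev {u v : V} (h : G.dir u v) : ¬ G.undir v u :=
  fun h' => G.dir_not_undir u v h (G.undir_symm'' h')

lemma adj_symm {u v : V} (h : G.Adj u v) : G.Adj v u := by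
  rcases h with h | h | h
  · exact Or.inr (Or.inl h)
  · exact Or.inl h
  · exact Or.inr (Or.inr (G.undir_symm'' h))

lemma adj_irrefl (v : V) : ¬ G.Adj v v := by
  rintro (h | h | h)
  · exact G.dir_irrefl v h
  · exact G.dir_irrefl v h
  · exact G.undir_irrefl v h

/-- Undirected reachability. -/
abbrev UW (u v : V) : Prop := Relation.ReflTransGen G.undir u v

lemma uw_symm {u v : V} (h : G.UW u v) : G.UW v u := by
  induction h with
  | refl => exact Relation.ReflTransGen.refl
  | tail _ he ih => exact Relation.ReflTransGen.head (G.undir_symm'' he) ih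

/-- An undirected path, ℕ-indexed. -/
def UPathN (n : ℕ) (ρ : ℕ → V) : Prop :=
  (∀ i, i < n → G.undir (ρ i) (ρ (i+1))) ∧
  (∀ i j, i ≤ n → j ≤ n → i ≠ j → ρ i ≠ ρ j)

lemma upathn_walk {n : ℕ} {ρ : ℕ → V} (h : ∀ i, i < n → G.undir (ρ i) (ρ (i+1))) :
    ∀ i j, i ≤ j → j ≤ n → G.UW (ρ i) (ρ j) := by
  intro i j hij hjn
  induction j with
  | zero => cases Nat.le_zero.mp hij; exact Relation.ReflTransGen.refl
  | succ j ih =>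
    rcases Nat.lt_or_ge i (j+1) with hl | hg
    · exact Relation.ReflTransGen.tail
        (ih (Nat.lt_succ_iff.mp hl) (le_trans (Nat.le_succ j) hjn))
        (h j (lt_of_lt_of_le (Nat.lt_succ_self j) hjn))
    · have : i = j + 1 := le_antisymm hij hg
      subst this; exact Relation.ReflTransGen.refl

lemma walk_to_upathn {u v : V} (h : G.UW u v) :
    ∃ n ρ, ρ 0 = u ∧ ρ n = v ∧ G.UPathN n ρ := by
  induction h with
  | refl =>
    exact ⟨0, fun _ => u, rfl, rfl, fun i hi => absurd hi (Nat.not_lt_zero i),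
      fun i j hi hj hij => by
        cases Nat.le_zero.mp hi; cases Nat.le_zero.mp hj; exact absurd rfl hij⟩
  | @tail w v hw he ih =>
    obtain ⟨n, ρ, h0, hn, hedge, hinj⟩ := ih
    by_cases hv : ∃ i, i ≤ n ∧ ρ i = v
    · obtain ⟨i, hin, hiv⟩ := hv
      exact ⟨i, ρ, h0, hiv, fun t ht => hedge t (lt_of_lt_of_le ht hin),
        fun s t hs ht hst => hinj s t (le_trans hs hin) (le_trans ht hin) hst⟩
    · push_neg at hv
      refine ⟨n+1, fun j => if j ≤ n then ρ j else v, by simp [h0], by simp, ?_, ?_⟩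
      · intro i hi
        rcases Nat.lt_or_ge i n with hl | hg
        · simpa [Nat.le_of_lt hl, Nat.succ_le_of_lt hl] using hedge i hl
        · have : i = n := le_antisymm (Nat.lt_succ_iff.mp hi) hg
          subst this
          simpa [hn, Nat.not_succ_le_self] using he
      · intro i j hi hj hij
        rcases Nat.lt_or_ge i (n+1) with hi' | hi'
        · rcases Nat.lt_or_ge j (n+1) with hj' | hj'
          · have hi'' := Nat.lt_succ_iff.mp hi'
            have hj'' := Nat.lt_succ_iff.mp hj'
            simpa [hi'', hj''] using hinj i j hi'' hj'' hij
          · have : j = n + 1 := le_antisymm hj hj'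
            subst this
            have hi'' := Nat.lt_succ_iff.mp hi'
            simp only [hi'', if_pos, Nat.not_succ_le_self, if_neg, not_false_iff]
            exact fun hh => hv i hi'' hh
        · have : i = n + 1 := le_antisymm hi hi'
          subst this
          have hj'' : j ≤ n := Nat.lt_succ_iff.mp (lt_of_le_of_ne hj
            (fun hh => hij hh.symm))
          simp only [Nat.not_succ_le_self, if_neg, not_false_iff, hj'', if_pos]
          exact fun hh => hv j hj'' hh.symm

end ChainGraph
namespace ChainGraph

variable {V : Type*} (G : ChainGraph V)

lemma no_walk_back {u v : V} (hd : G.dir u v) : ¬ G.UW v u := by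
  intro hw
  obtain ⟨n, ρ, h0, hn, hedge, hinj⟩ := G.walk_to_upathn hw
  have huv : u ≠ v := fun h => G.dir_irrefl u (h ▸ hd)
  have hn1 : 1 ≤ n := by
    rcases Nat.eq_zero_or_pos n with h | h
    · subst h; exact (huv (hn.symm.trans h0)).elim
    · exact h
  set σ : ℕ → V := fun i => if i = 0 then u else ρ (i-1) with hσ
  have hcyc := G.no_partially_directed_cycle (n+1) σ (by omega) ?_ ?_ ?_
  · exact hcyc ⟨0, Nat.succ_pos n, by simp [hσ, h0, hd]⟩
  · have h1 : n + 1 ≠ 0 := Nat.succ_ne_zero n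
    show (if n+1 = 0 then u else ρ (n+1-1)) = (if (0:ℕ) = 0 then u else ρ (0-1))
    simp only [if_neg h1, if_pos rfl, Nat.add_sub_cancel]
    exact hn
  · intro i j hij hjn
    simp only [hσ]
    rcases Nat.eq_zero_or_pos i with hi0 | hi0
    · subst hi0
      have hj0 : j ≠ 0 := by omega
      simp only [if_pos rfl, if_neg hj0]
      intro hh
      have : ρ (j-1) ≠ ρ n := hinj (j-1) n (by omega) (le_refl n) (by omega)
      exact this (hh ▸ hn.symm ▸ rfl)
    · have hi0' : i ≠ 0 := by omega
      have hj0' : j ≠ 0 := by omega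
      simp only [if_neg hi0', if_neg hj0']
      exact hinj (i-1) (j-1) (by omega) (by omega) (by omega)
  · intro i hi
    simp only [hσ]
    rcases Nat.eq_zero_or_pos i with hi0 | hi0
    · subst hi0; simp [h0]; exact Or.inl hd
    · have hi0' : i ≠ 0 := by omega
      have : i + 1 ≠ 0 := by omega
      simp only [if_neg hi0', if_neg this]
      have : i - 1 + 1 = i := by omega
      exact Or.inr (this ▸ hedge (i-1) (by omega))

lemma ne_of_dir_walk {u v w : V} (hd : G.dir u v) (hw : G.UW v w) : u ≠ w := by
  intro h; subst h; exact G.no_walk_back hd hw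

lemma no_dir_back {u v w : V} (hd : G.dir u v) (hw : G.UW v w) : ¬ G.dir w u := by
  intro hdw
  obtain ⟨n, ρ, h0, hn, hedge, hinj⟩ := G.walk_to_upathn hw
  have hur : ∀ i, i ≤ n → u ≠ ρ i := by
    intro i hi h
    have hw' : G.UW v (ρ i) := by
      have := G.upathn_walk hedge 0 i (Nat.zero_le i) hi
      rwa [h0] at this
    exact G.no_walk_back hd (by rwa [← h] at hw')
  set σ : ℕ → V := fun i => if 1 ≤ i ∧ i ≤ n+1 then ρ (i-1) else u with hσ
  have hcyc := G.no_partially_directed_cycle (n+2) σ (by omega) ?_ ?_ ?_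
  · exact hcyc ⟨0, by omega, by simp [hσ, h0, hd]⟩
  · simp [hσ, show ¬ (1 ≤ 0) by omega, show ¬ (n+2 ≤ n+1) by omega]
  · intro i j hij hjn
    simp only [hσ]
    rcases Nat.eq_zero_or_pos i with hi0 | hi0
    · subst hi0
      have : 1 ≤ j ∧ j ≤ n+1 := by omega
      simp only [show ¬ (1 ≤ 0 ∧ 0 ≤ n+1) by omega, if_neg, not_false_iff, this, if_pos]
      exact hur (j-1) (by omega)
    · have h1 : 1 ≤ i ∧ i ≤ n+1 := by omega
      have h2 : 1 ≤ j ∧ j ≤ n+1 := by omega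
      simp only [if_pos h1, if_pos h2]
      exact hinj (i-1) (j-1) (by omega) (by omega) (by omega)
  · intro i hi
    simp only [hσ]
    rcases Nat.eq_zero_or_pos i with hi0 | hi0
    · subst hi0
      simp only [show ¬ (1 ≤ 0 ∧ 0 ≤ n+1) by omega, if_neg, not_false_iff,
        show 1 ≤ 1 ∧ 1 ≤ n+1 by omega, if_pos]
      simp only [Nat.sub_self, h0]
      exact Or.inl hd
    · rcases Nat.lt_or_ge i (n+1) with hl | hg
      · have h1 : 1 ≤ i ∧ i ≤ n+1 := by omega
        have h2 : 1 ≤ i+1 ∧ i+1 ≤ n+1 := by omega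
        simp only [if_pos h1, if_pos h2]
        have : i - 1 + 1 = i := by omega
        exact Or.inr (this ▸ hedge (i-1) (by omega))
      · have : i = n+1 := by omega
        subst this
        have h1 : 1 ≤ n+1 ∧ n+1 ≤ n+1 := by omega
        simp only [if_pos h1, show ¬ (1 ≤ n+2 ∧ n+2 ≤ n+1) by omega, if_neg, not_false_iff]
        simp only [Nat.add_sub_cancel, hn]
        exact Or.inl hdw

lemma no_undir_back {u v w : V} (hd : G.dir u v) (hw : G.UW v w) : ¬ G.undir w u :=
  fun h => G.no_walk_back hd (Relation.ReflTransGen.tail hw h)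

lemma adj_dir_of_walk {u v w : V} (hd : G.dir u v) (hw : G.UW v w) (ha : G.Adj u w) :
    G.dir u w := by
  rcases ha with h | h | h
  · exact h
  · exact absurd h (G.no_dir_back hd hw)
  · exact absurd (G.undir_symm'' h) (G.no_undir_back hd hw)

end ChainGraph
namespace ChainGraph

variable {V : Type*} (G : ChainGraph V)

lemma mem_csp_of_dir_walk_dir {T c d x : V} (hTc : G.dir T c) (hcd : G.UW c d)
    (hxd : G.dir x d) (hxT : x ≠ T) (hadj : ¬ G.Adj T x) : x ∈ G.csp T := by
  classical
  have hex : ∃ n, ∃ ρ : ℕ → V, G.dir T (ρ 0) ∧ G.dir x (ρ n) ∧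
      ∀ i, i < n → G.undir (ρ i) (ρ (i+1)) := by
    obtain ⟨n, ρ, h0, hn, hedge, _⟩ := G.walk_to_upathn hcd
    exact ⟨n, ρ, h0 ▸ hTc, hn ▸ hxd, hedge⟩
  obtain ⟨k, ρ, hT0, hxk, hedge, hmin⟩ :
      ∃ k, ∃ ρ : ℕ → V, G.dir T (ρ 0) ∧ G.dir x (ρ k) ∧
        (∀ i, i < k → G.undir (ρ i) (ρ (i+1))) ∧
        ∀ m, m < k → ¬ ∃ ρ' : ℕ → V, G.dir T (ρ' 0) ∧ G.dir x (ρ' m) ∧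
          ∀ i, i < m → G.undir (ρ' i) (ρ' (i+1)) := by
    obtain ⟨ρ, h1, h2, h3⟩ := Nat.find_spec hex
    exact ⟨Nat.find hex, ρ, h1, h2, h3, fun m hm => Nat.find_min hex hm⟩
  have hwk : ∀ i j, i ≤ j → j ≤ k → G.UW (ρ i) (ρ j) := G.upathn_walk hedge
  -- no directed edge from T except to ρ 0
  have hP1 : ∀ i, 1 ≤ i → i ≤ k → ¬ G.dir T (ρ i) := by
    intro i h1 hk hdi
    apply hmin (k - i) (by omega)
    refine ⟨fun j => ρ (i + j), by simpa using hdi, ?_, ?_⟩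
    · show G.dir x (ρ (i + (k - i)))
      rw [show i + (k - i) = k by omega]; exact hxk
    · intro j hj
      show G.undir (ρ (i + j)) (ρ (i + (j + 1)))
      rw [show i + (j + 1) = i + j + 1 by omega]
      exact hedge (i + j) (by omega)
  have hP2 : ∀ i, i < k → ¬ G.dir x (ρ i) := by
    intro i hi hdi
    exact hmin i hi ⟨ρ, hT0, hdi, fun j hj => hedge j (by omega)⟩
  -- distinctness
  have hinj : ∀ i j, i < j → j ≤ k → ρ i ≠ ρ j := by
    intro i j hij hjk heq
    apply hmin (k - (j - i)) (by omega)
    refine ⟨fun t => if t ≤ i then ρ t else ρ (t + (j - i)), by simp [hT0], ?_, ?_⟩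
    · show G.dir x (if k - (j - i) ≤ i then ρ (k - (j - i)) else ρ (k - (j - i) + (j - i)))
      by_cases hc : k - (j - i) ≤ i
      · have hkj : j = k := by omega
        have hi' : k - (j - i) = i := by omega
        rw [if_pos hc, hi', heq, hkj]
        exact hxk
      · rw [if_neg hc, show k - (j - i) + (j - i) = k by omega]
        exact hxk
    · intro t ht
      show G.undir (if t ≤ i then ρ t else ρ (t + (j - i)))
        (if t + 1 ≤ i then ρ (t+1) else ρ (t + 1 + (j - i)))
      by_cases h1 : t + 1 ≤ i
      · rw [if_pos (by omega : t ≤ i), if_pos h1]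
        exact hedge t (by omega)
      · by_cases h2 : t ≤ i
        · have hti : t = i := by omega
          rw [if_pos h2, if_neg h1]
          subst hti
          rw [heq, show t + 1 + (j - t) = j + 1 by omega]
          exact hedge j (by omega)
        · rw [if_neg h2, if_neg (by omega : ¬ t + 1 ≤ i),
            show t + 1 + (j - i) = t + (j - i) + 1 by omega]
          exact hedge (t + (j - i)) (by omega)
  -- no chords
  have hchord : ∀ i j, i + 1 < j → j ≤ k → ¬ G.Adj (ρ i) (ρ j) := by
    intro i j hij hjk ha
    rcases ha with h | h | h
    · exact G.no_walk_back h (G.uw_symm (hwk i j (by omega) hjk))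
    · exact G.no_walk_back h (hwk i j (by omega) hjk)
    · apply hmin (k - (j - i - 1)) (by omega)
      refine ⟨fun t => if t ≤ i then ρ t else ρ (t + (j - i) - 1), by simp [hT0], ?_, ?_⟩
      · show G.dir x (if k - (j - i - 1) ≤ i then ρ (k - (j - i - 1))
          else ρ (k - (j - i - 1) + (j - i) - 1))
        rw [if_neg (by omega : ¬ k - (j - i - 1) ≤ i),
          show k - (j - i - 1) + (j - i) - 1 = k by omega]
        exact hxk
      · intro t ht
        show G.undir (if t ≤ i then ρ t else ρ (t + (j - i) - 1))
          (if t + 1 ≤ i then ρ (t+1) else ρ (t + 1 + (j - i) - 1))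
        by_cases h1 : t + 1 ≤ i
        · rw [if_pos (by omega : t ≤ i), if_pos h1]
          exact hedge t (by omega)
        · by_cases h2 : t ≤ i
          · have hti : t = i := by omega
            rw [if_pos h2, if_neg h1]
            subst hti
            rw [show t + 1 + (j - t) - 1 = j by omega]
            exact h
          · rw [if_neg h2, if_neg (by omega : ¬ t + 1 ≤ i),
              show t + 1 + (j - i) - 1 = t + (j - i) - 1 + 1 by omega]
            exact hedge (t + (j - i) - 1) (by omega)
  -- relations of T and x to the corridor
  have hTi : ∀ i, i ≤ k → T ≠ ρ i ∧ (G.Adj T (ρ i) → G.dir T (ρ i)) := by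
    intro i hi
    have hw := hwk 0 i (Nat.zero_le i) hi
    exact ⟨G.ne_of_dir_walk hT0 hw, G.adj_dir_of_walk hT0 hw⟩
  have hxi : ∀ i, i ≤ k → x ≠ ρ i ∧ (G.Adj x (ρ i) → G.dir x (ρ i)) := by
    intro i hi
    have hw := G.uw_symm (hwk i k hi (le_refl k))
    exact ⟨G.ne_of_dir_walk hxk hw, G.adj_dir_of_walk hxk hw⟩
  -- assemble the minimal complex
  set σ : ℕ → V := fun i => if i = 0 then T else if i ≤ k+1 then ρ (i-1) else x with hσ
  have hσ0 : σ 0 = T := by simp [hσ]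
  have hσmid : ∀ i, 1 ≤ i → i ≤ k+1 → σ i = ρ (i-1) := by
    intro i h1 h2
    simp only [hσ, if_neg (by omega : ¬ i = 0), if_pos h2]
  have hσtop : σ (k+2) = x := by
    simp only [hσ, if_neg (by omega : ¬ k+2 = 0), if_neg (by omega : ¬ k+2 ≤ k+1)]
  refine ⟨k+1, σ, by omega, hσ0, hσtop, ?_, ?_, ?_, ?_, ?_⟩
  · -- distinctness
    intro i j hi hj hij heq
    rcases Nat.eq_zero_or_pos i with hi0 | hi0
    · subst hi0
      rcases Nat.eq_zero_or_pos j with hj0 | hj0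
      · exact hij (hj0 ▸ rfl)
      · by_cases hj1 : j ≤ k+1
        · rw [hσ0, hσmid j hj0 hj1] at heq
          exact (hTi (j-1) (by omega)).1 heq
        · have : j = k+2 := by omega
          subst this
          rw [hσ0, hσtop] at heq
          exact hxT heq.symm
    · rcases Nat.eq_zero_or_pos j with hj0 | hj0
      · subst hj0
        by_cases hi1 : i ≤ k+1
        · rw [hσ0, hσmid i hi0 hi1] at heq
          exact (hTi (i-1) (by omega)).1 heq.symm
        · have : i = k+2 := by omega
          subst this
          rw [hσ0, hσtop] at heq
          exact hxT heq
      · by_cases hi1 : i ≤ k+1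
        · by_cases hj1 : j ≤ k+1
          · rw [hσmid i hi0 hi1, hσmid j hj0 hj1] at heq
            rcases Nat.lt_or_ge (i-1) (j-1) with hl | hg
            · exact hinj (i-1) (j-1) hl (by omega) heq
            · have : j - 1 < i - 1 := by omega
              exact hinj (j-1) (i-1) this (by omega) heq.symm
          · have : j = k+2 := by omega
            subst this
            rw [hσmid i hi0 hi1, hσtop] at heq
            exact (hxi (i-1) (by omega)).1 heq.symm
        · have : i = k+2 := by omega
          subst this
          by_cases hj1 : j ≤ k+1
          · rw [hσmid j hj0 hj1, hσtop] at heq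
            exact (hxi (j-1) (by omega)).1 heq
          · have : j = k+2 := by omega
            subst this
            exact hij rfl
  · rw [hσmid 1 (le_refl 1) (by omega)]; exact hT0
  · rw [hσmid (k+1) (by omega) (le_refl _)]
    simpa using hxk
  · intro i h1 h2
    rw [hσmid i h1 (by omega), hσmid (i+1) (by omega) (by omega)]
    rw [show i + 1 - 1 = (i - 1) + 1 by omega]
    exact hedge (i-1) (by omega)
  · -- induced
    intro i j hi hj ha
    rcases Nat.eq_zero_or_pos i with hi0 | hi0
    · subst hi0
      rcases Nat.eq_zero_or_pos j with hj0 | hj0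
      · subst hj0; exact absurd (hσ0 ▸ ha) (G.adj_irrefl T)
      · by_cases hj1 : j ≤ k+1
        · rw [hσ0, hσmid j hj0 hj1] at ha
          have := (hTi (j-1) (by omega)).2 ha
          rcases Nat.eq_or_lt_of_le hj0 with he | hl
          · left; omega
          · exact absurd this (hP1 (j-1) (by omega) (by omega))
        · have : j = k+2 := by omega
          subst this
          rw [hσ0, hσtop] at ha
          exact absurd ha hadj
    · rcases Nat.eq_zero_or_pos j with hj0 | hj0
      · subst hj0
        by_cases hi1 : i ≤ k+1
        · rw [hσ0, hσmid i hi0 hi1] at ha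
          have := (hTi (i-1) (by omega)).2 (G.adj_symm ha)
          rcases Nat.eq_or_lt_of_le hi0 with he | hl
          · right; omega
          · exact absurd this (hP1 (i-1) (by omega) (by omega))
        · have : i = k+2 := by omega
          subst this
          rw [hσ0, hσtop] at ha
          exact absurd (G.adj_symm ha) hadj
      · by_cases hi1 : i ≤ k+1
        · by_cases hj1 : j ≤ k+1
          · rw [hσmid i hi0 hi1, hσmid j hj0 hj1] at ha
            rcases Nat.lt_trichotomy i j with hl | he | hg
            · by_cases hj2 : j = i + 1
              · left; exact hj2
              · exact absurd ha (hchord (i-1) (j-1) (by omega) (by omega))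
            · subst he; exact absurd ha (G.adj_irrefl _)
            · by_cases hi2 : i = j + 1
              · right; exact hi2
              · exact absurd (G.adj_symm ha) (hchord (j-1) (i-1) (by omega) (by omega))
          · have : j = k+2 := by omega
            subst this
            rw [hσmid i hi0 hi1, hσtop] at ha
            have := (hxi (i-1) (by omega)).2 (G.adj_symm ha)
            by_cases hik : i = k + 1
            · left; omega
            · exact absurd this (hP2 (i-1) (by omega))
        · have : i = k+2 := by omega
          subst this
          by_cases hj1 : j ≤ k+1
          · rw [hσmid j hj0 hj1, hσtop] at ha
            have := (hxi (j-1) (by omega)).2 ha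
            by_cases hjk : j = k + 1
            · right; omega
            · exact absurd this (hP2 (j-1) (by omega))
          · have : j = k+2 := by omega
            subst this
            rw [hσtop] at ha
            exact absurd ha (G.adj_irrefl x)

end ChainGraph
namespace ChainGraph

variable {V : Type*} {G : ChainGraph V}

/-- Existence of the maximal undirected run starting at position `k`. -/
lemma Route.exists_maxb (ω : Route G) (k : ℕ) (hk : k ≤ ω.len) :
    ∃ b, k ≤ b ∧ b ≤ ω.len ∧
      (∀ t, k ≤ t → t < b → G.undir (ω.vtx t) (ω.vtx (t+1))) ∧
      (b < ω.len → ¬ G.undir (ω.vtx b) (ω.vtx (b + 1))) ∧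
      (k < ω.len → G.undir (ω.vtx k) (ω.vtx (k+1)) → k + 1 ≤ b) := by
  classical
  have hPex : ∃ j, k + j = ω.len ∨
      (k + j < ω.len ∧ ¬ G.undir (ω.vtx (k+j)) (ω.vtx (k+j+1))) := ⟨ω.len - k, by left; omega⟩
  refine ⟨k + Nat.find hPex, by omega, ?_, ?_, ?_, ?_⟩
  · rcases Nat.find_spec hPex with h | h <;> omega
  · intro t ht1 ht2
    have hm := Nat.find_min hPex (m := t - k) (by omega)
    push_neg at hm
    rw [show k + (t - k) = t by omega] at hm
    by_contra hu
    rcases Nat.find_spec hPex with h | h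
    · exact hu (hm.2 (by omega))
    · exact hu (hm.2 (by omega))
  · intro hlt
    rcases Nat.find_spec hPex with h | h
    · omega
    · exact h.2
  · intro hklen hu
    by_contra hb
    have h0 : Nat.find hPex = 0 := by omega
    rcases Nat.find_spec hPex with h | h
    · omega
    · rw [h0] at h
      simp only [Nat.add_zero] at h
      exact h.2 hu

lemma Route.walk_of_run (ω : Route G) {s t : ℕ}
    (h : ∀ j, s ≤ j → j < t → G.undir (ω.vtx j) (ω.vtx (j+1))) (hst : s ≤ t) :
    G.UW (ω.vtx s) (ω.vtx t) := by
  induction t with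
  | zero => cases Nat.le_zero.mp hst; exact Relation.ReflTransGen.refl
  | succ t ih =>
    rcases Nat.lt_or_ge s (t+1) with hl | hg
    · exact Relation.ReflTransGen.tail
        (ih (fun j hj1 hj2 => h j hj1 (by omega)) (by omega))
        (h t (by omega) (by omega))
    · have : s = t + 1 := by omega
      subst this; exact Relation.ReflTransGen.refl

/-- The reversal of a route. -/
def Route.rev (ω : Route G) : Route G where
  len := ω.len
  vtx := fun i => ω.vtx (ω.len - i)
  link := by
    intro i hi
    have h := ω.link (ω.len - i - 1) (by omega)
    rw [show ω.len - i - 1 + 1 = ω.len - i by omega] at h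
    show G.Adj (ω.vtx (ω.len - i)) (ω.vtx (ω.len - (i+1)))
    rw [show ω.len - (i+1) = ω.len - i - 1 by omega]
    exact G.adj_symm h

/-- Transfer of the non-collider-section condition to the reversed route. -/
lemma Route.rev_noncollider_cond (ω : Route G) (Z : Set V)
    (h : ∀ a b, ω.IsSection a b → ¬ ω.IsColliderSection a b →
      ∀ k, a ≤ k → k ≤ b → ω.vtx k ∉ Z) :
    ∀ a b, ω.rev.IsSection a b → ¬ ω.rev.IsColliderSection a b →
      ∀ k, a ≤ k → k ≤ b → ω.rev.vtx k ∉ Z := by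
  intro a b hsec hncol k hak hkb
  obtain ⟨hab, hblen, hmid, hlft, hrgt⟩ := hsec
  have hblen' : b ≤ ω.len := hblen
  have hsec' : ω.IsSection (ω.len - b) (ω.len - a) := by
    refine ⟨by omega, by omega, ?_, ?_, ?_⟩
    · intro t ht1 ht2
      have := hmid (ω.len - 1 - t) (by omega) (by omega)
      have e : G.undir (ω.vtx (ω.len - (ω.len - 1 - t))) (ω.vtx (ω.len - (ω.len - 1 - t + 1))) :=
        this
      rw [show ω.len - (ω.len - 1 - t) = t + 1 by omega,
        show ω.len - (ω.len - 1 - t + 1) = t by omega] at e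
      exact G.undir_symm'' e
    · intro ha0
      have hblt : b < ω.len := by omega
      have hr := hrgt (by show b < ω.len; omega)
      intro hu
      apply hr
      show G.undir (ω.vtx (ω.len - b)) (ω.vtx (ω.len - (b+1)))
      rw [show ω.len - (b+1) = ω.len - b - 1 by omega]
      exact G.undir_symm'' hu
    · intro hlt
      have hl := hlft (by omega : 0 < a)
      intro hu
      apply hl
      show G.undir (ω.vtx (ω.len - (a-1))) (ω.vtx (ω.len - a))
      rw [show ω.len - (a-1) = ω.len - a + 1 by omega]
      exact G.undir_symm'' hu
  have hncol' : ¬ ω.IsColliderSection (ω.len - b) (ω.len - a) := by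
    intro ⟨_, hpos, hlt, hd1, hd2⟩
    apply hncol
    refine ⟨⟨hab, hblen, hmid, hlft, hrgt⟩, by omega, by show b < ω.len; omega, ?_, ?_⟩
    · show G.dir (ω.vtx (ω.len - (a-1))) (ω.vtx (ω.len - a))
      rw [show ω.len - (a-1) = ω.len - a + 1 by omega]
      exact hd2
    · show G.dir (ω.vtx (ω.len - (b+1))) (ω.vtx (ω.len - b))
      rw [show ω.len - (b+1) = ω.len - b - 1 by omega]
      exact hd1
  exact h (ω.len - b) (ω.len - a) hsec' hncol' (ω.len - k) (by omega) (by omega)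

end ChainGraph
namespace ChainGraph

variable {V : Type*} {G : ChainGraph V}

lemma mem_mb_pa {T u : V} (h : G.dir u T) : u ∈ G.mb T := by
  simp only [ChainGraph.mb, Set.mem_union]; exact Or.inl (Or.inl (Or.inl h))

lemma mem_mb_nb {T u : V} (h : G.undir u T) : u ∈ G.mb T := by
  simp only [ChainGraph.mb, Set.mem_union]; exact Or.inl (Or.inl (Or.inr h))

lemma mem_mb_ch {T u : V} (h : G.dir T u) : u ∈ G.mb T := by
  simp only [ChainGraph.mb, Set.mem_union]; exact Or.inl (Or.inr h)

lemma mem_mb_csp {T u : V} (h : u ∈ G.csp T) : u ∈ G.mb T := by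
  simp only [ChainGraph.mb, Set.mem_union]; exact Or.inr h

/-- Key blocking lemma: along a route that never puts a vertex of `Mb(T)` in a
non-collider section, if position `m` carries `T` (entered by an edge out of `T`,
or at the start), then the final vertex is `T` or belongs to `Mb(T)`. -/
lemma Route.key {T : V} (ω : Route G)
    (hact : ∀ a b, ω.IsSection a b → ¬ ω.IsColliderSection a b →
      ∀ k, a ≤ k → k ≤ b → ω.vtx k ∉ G.mb T) :
    ∀ d m, ω.len - m ≤ d → m ≤ ω.len → ω.vtx m = T →
      (m = 0 ∨ G.dir (ω.vtx m) (ω.vtx (m-1))) →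
      ω.vtx ω.len = T ∨ ω.vtx ω.len ∈ G.mb T := by
  intro d
  induction d with
  | zero =>
    intro m hd hm hT _
    left
    rw [show ω.len = m by omega]
    exact hT
  | succ d ih =>
    intro m hd hm hT hgood
    by_cases hml : m = ω.len
    · left; rw [← hml]; exact hT
    have hmlt : m < ω.len := lt_of_le_of_ne hm hml
    rcases ω.link m hmlt with hdir | hdir | hundir
    · -- T → vtx (m+1) : child
      obtain ⟨b, hb1, hb2, hb3, hb4, hb5⟩ := ω.exists_maxb (m+1) (by omega)
      have hch : ω.vtx (m+1) ∈ G.mb T := mem_mb_ch (by rw [← hT]; exact hdir)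
      have hlm : 0 < m + 1 → ¬ G.undir (ω.vtx m) (ω.vtx (m+1)) :=
        fun _ hu => G.dir_not_undir _ _ hdir hu
      have hsec : ω.IsSection (m+1) b := ⟨hb1, hb2, hb3, hlm, hb4⟩
      by_cases hcol : ω.IsColliderSection (m+1) b
      · obtain ⟨_, _, hblen, _, hdx⟩ := hcol
        by_cases hxT : ω.vtx (b+1) = T
        · exact ih (b+1) (by omega) (by omega) hxT (Or.inr hdx)
        · have hwalk : G.UW (ω.vtx (m+1)) (ω.vtx b) :=
            ω.walk_of_run (fun j hj1 hj2 => hb3 j hj1 hj2) hb1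
          have hxmb : ω.vtx (b+1) ∈ G.mb T := by
            by_cases hadj : G.Adj T (ω.vtx (b+1))
            · rcases hadj with h | h | h
              · exact mem_mb_ch h
              · exact mem_mb_pa h
              · exact mem_mb_nb (G.undir_symm'' h)
            · exact mem_mb_csp
                (G.mem_csp_of_dir_walk_dir (by rw [← hT]; exact hdir) hwalk hdx hxT hadj)
          obtain ⟨b', hb1', hb2', hb3', hb4', hb5'⟩ := ω.exists_maxb (b+1) (by omega)
          have hlm' : 0 < b + 1 → ¬ G.undir (ω.vtx b) (ω.vtx (b+1)) :=
            fun _ hu => G.dir_not_undir _ _ hdx (G.undir_symm'' hu)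
          have hsec' : ω.IsSection (b+1) b' := ⟨hb1', hb2', hb3', hlm', hb4'⟩
          have hncol' : ¬ ω.IsColliderSection (b+1) b' := by
            intro ⟨_, _, _, hdd, _⟩
            exact G.dir_asymm _ _ hdx hdd
          exact absurd hxmb (hact (b+1) b' hsec' hncol' (b+1) (le_refl _) hb1')
      · exact absurd hch (hact (m+1) b hsec hcol (m+1) (le_refl _) hb1)
    · -- vtx (m+1) → T : parent
      have hpa : ω.vtx (m+1) ∈ G.mb T := mem_mb_pa (by rw [← hT]; exact hdir)
      obtain ⟨b, hb1, hb2, hb3, hb4, hb5⟩ := ω.exists_maxb (m+1) (by omega)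
      have hlm : 0 < m + 1 → ¬ G.undir (ω.vtx m) (ω.vtx (m+1)) :=
        fun _ hu => G.dir_not_undir _ _ hdir (G.undir_symm'' hu)
      have hsec : ω.IsSection (m+1) b := ⟨hb1, hb2, hb3, hlm, hb4⟩
      have hncol : ¬ ω.IsColliderSection (m+1) b := by
        intro ⟨_, _, _, hdd, _⟩
        exact G.dir_asymm _ _ hdir hdd
      exact absurd hpa (hact (m+1) b hsec hncol (m+1) (le_refl _) hb1)
    · -- T − vtx (m+1) : neighbour
      have hnb : ω.vtx (m+1) ∈ G.mb T :=
        mem_mb_nb (G.undir_symm'' (by rw [← hT]; exact hundir))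
      obtain ⟨b, hb1, hb2, hb3, hb4, hb5⟩ := ω.exists_maxb m (by omega)
      have hlm : 0 < m → ¬ G.undir (ω.vtx (m-1)) (ω.vtx m) := by
        intro h0 hu
        rcases hgood with h | h
        · omega
        · exact G.dir_not_undir _ _ h (G.undir_symm'' hu)
      have hsec : ω.IsSection m b := ⟨hb1, hb2, hb3, hlm, hb4⟩
      have hncol : ¬ ω.IsColliderSection m b := by
        intro ⟨_, hpos, _, hdd, _⟩
        rcases hgood with h | h
        · omega
        · exact G.dir_asymm _ _ h hdd
      exact absurd hnb (hact m b hsec hncol (m+1) (by omega) (hb5 hmlt hundir))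

end ChainGraph
namespace ChainGraph

variable {V : Type*} {G : ChainGraph V}

lemma not_mem_mb_self (G : ChainGraph V) (T : V) : T ∉ G.mb T := by
  intro h
  simp only [mb, Set.mem_union, pa, nb, ch, csp, Set.mem_setOf_eq] at h
  rcases h with ((h | h) | h) | h
  · exact G.dir_irrefl T h
  · exact G.undir_irrefl T h
  · exact G.dir_irrefl T h
  · obtain ⟨n, ρ, hn, h0, hn1, hinj, _⟩ := h
    exact hinj 0 (n+1) (by omega) (le_refl _) (by omega) (h0.trans hn1.symm)

lemma mb_csep (G : ChainGraph V) (T : V) :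
    G.CSep {T} (Set.univ \ ({T} ∪ G.mb T)) (G.mb T) := by
  intro ω hend hactive
  have h2 := hactive.2
  rcases hend with ⟨h0, hlen⟩ | ⟨h0, hlen⟩
  · have hT : ω.vtx 0 = T := Set.mem_singleton_iff.mp h0
    have hk := ω.key h2 ω.len 0 (by omega) (by omega) hT (Or.inl rfl)
    obtain ⟨_, hnot⟩ := hlen
    rcases hk with h | h
    · exact hnot (Or.inl (Set.mem_singleton_iff.mpr h))
    · exact hnot (Or.inr h)
  · have h2' := ω.rev_noncollider_cond _ h2
    have hT : ω.rev.vtx 0 = T := by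
      show ω.vtx (ω.len - 0) = T
      rw [Nat.sub_zero]
      exact Set.mem_singleton_iff.mp hlen
    have hk := ω.rev.key h2' ω.rev.len 0 (by omega) (by omega) hT (Or.inl rfl)
    have h0' : ω.rev.vtx ω.rev.len = ω.vtx 0 := by
      show ω.vtx (ω.len - ω.len) = ω.vtx 0
      rw [Nat.sub_self]
    rw [h0'] at hk
    obtain ⟨_, hnot⟩ := h0
    rcases hk with h | h
    · exact hnot (Or.inl (Set.mem_singleton_iff.mpr h))
    · exact hnot (Or.inr h)

lemma Route.active_single (ω : Route G) {T v : V} (S : Set V) (hlen : ω.len = 1)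
    (h0 : ω.vtx 0 = T) (h1 : ω.vtx 1 = v) (hT : T ∉ S) (hv : v ∉ S) : ω.Active S := by
  constructor
  · rintro a b ⟨⟨hab, hble, _⟩, hpos, hlt, _, _⟩
    rw [hlen] at hlt
    omega
  · rintro a b ⟨hab, hble, _⟩ _ k hak hkb
    rw [hlen] at hble
    rcases Nat.eq_zero_or_pos k with hk | hk
    · subst hk; rw [h0]; exact hT
    · have : k = 1 := by omega
      subst this; rw [h1]; exact hv

lemma Route.active_complex (ω : Route G) {T v : V} (S : Set V) {n : ℕ}
    (hlen : ω.len = n+1) (hn : 1 ≤ n)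
    (h0 : ω.vtx 0 = T) (hn1 : ω.vtx (n+1) = v)
    (hd1 : G.dir T (ω.vtx 1)) (hdn : G.dir v (ω.vtx n))
    (hund : ∀ i, 1 ≤ i → i < n → G.undir (ω.vtx i) (ω.vtx (i+1)))
    (hch1 : ω.vtx 1 ∈ S) (hT : T ∉ S) (hv : v ∉ S) : ω.Active S := by
  constructor
  · rintro a b ⟨⟨hab, hble, hmid, hlft, hrgt⟩, hpos, hblt, hda, hdb⟩
    rw [hlen] at hblt hble
    have ha1 : a = 1 := by
      by_contra hne
      have := hund (a-1) (by omega) (by omega)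
      rw [show a-1+1 = a by omega] at this
      exact hlft hpos this
    exact ⟨1, by omega, by omega, Set.mem_union_left _ hch1⟩
  · rintro a b ⟨hab, hble, hmid, hlft, hrgt⟩ hncol k hak hkb
    rw [hlen] at hble
    by_cases hk0 : k = 0
    · subst hk0; rw [h0]; exact hT
    by_cases hkn : k = n+1
    · subst hkn; rw [hn1]; exact hv
    intro hkS
    have hk1 : 1 ≤ k := by omega
    have hkn' : k ≤ n := by omega
    have ha1 : a = 1 := by
      rcases Nat.eq_zero_or_pos a with h | h
      · exfalso
        subst h
        have := hmid 0 (le_refl 0) (by omega)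
        rw [h0] at this
        exact G.dir_not_undir _ _ hd1 this
      · by_contra hne
        have := hund (a-1) (by omega) (by omega)
        rw [show a-1+1 = a by omega] at this
        exact hlft h this
    have hbn : b = n := by
      by_cases hb : b = n+1
      · exfalso
        subst hb
        have := hmid n (by omega) (by omega)
        rw [hn1] at this
        exact G.dir_not_undir _ _ hdn (G.undir_symm'' this)
      · by_contra hne
        have hu := hund b (by omega) (by omega)
        exact hrgt (by rw [hlen]; omega) hu
    apply hncol
    refine ⟨⟨hab, hble.trans_eq hlen.symm, hmid, hlft, hrgt⟩, by omega,
      by rw [hlen]; omega, ?_, ?_⟩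
    · rw [ha1]
      show G.dir (ω.vtx 0) (ω.vtx 1)
      rw [h0]
      exact hd1
    · rw [hbn, hn1]
      exact hdn

end ChainGraph
end LWF

namespace LWF

/-- Let `P` be a joint distribution over variables indexed by
`V` that satisfies the global Markov property with respect to the LWF chain
graph `G` and is faithful to `G` (here `P`'s independence structure is
abstracted by a conditional-independence relation `CI` on sets of variables:
for disjoint sets, c-separation implies conditional independence and
conversely). Then for every `T ∈ V`, `Mb(T)` is the unique inclusion-minimal
set `S ⊆ V ∖ {T}` such that `T` is conditionally independent of
`V ∖ ({T} ∪ S)` given `S` under `P`. -/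
theorem mb_unique_minimal_condIndep {V : Type*} [Fintype V] (G : ChainGraph V)
    (CI : Set V → Set V → Set V → Prop)
    (hGMP : ∀ A B S : Set V, Disjoint A B → Disjoint A S → Disjoint B S →
      G.CSep A B S → CI A B S)
    (hFaithful : ∀ A B S : Set V, Disjoint A B → Disjoint A S → Disjoint B S →
      CI A B S → G.CSep A B S)
    (T : V) :
    T ∉ G.mb T ∧
    CI {T} (Set.univ \ ({T} ∪ G.mb T)) (G.mb T) ∧
    (∀ S : Set V, T ∉ S → CI {T} (Set.univ \ ({T} ∪ S)) S → G.mb T ⊆ S) := by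
  classical
  have hTm : T ∉ G.mb T := G.not_mem_mb_self T
  have hdisj : ∀ X : Set V, T ∉ X →
      Disjoint ({T} : Set V) (Set.univ \ ({T} ∪ X)) ∧
      Disjoint ({T} : Set V) X ∧
      Disjoint (Set.univ \ ({T} ∪ X)) X := by
    intro X hTX
    refine ⟨?_, ?_, ?_⟩
    · rw [Set.disjoint_singleton_left]
      rintro ⟨_, h⟩
      exact h (Or.inl rfl)
    · rwa [Set.disjoint_singleton_left]
    · rw [Set.disjoint_left]
      rintro a ⟨_, ha⟩ haX
      exact ha (Or.inr haX)
  obtain ⟨hd1, hd2, hd3⟩ := hdisj (G.mb T) hTm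
  refine ⟨hTm, hGMP _ _ _ hd1 hd2 hd3 (G.mb_csep T), ?_⟩
  intro S hTS hCI
  obtain ⟨he1, he2, he3⟩ := hdisj S hTS
  have hsep := hFaithful _ _ _ he1 he2 he3 hCI
  -- every vertex adjacent to T is in S
  have hadjS : ∀ v, G.Adj T v → v ∈ S := by
    intro v hadj
    by_contra hvS
    have hvT : v ≠ T := fun h => G.adj_irrefl T (h ▸ hadj)
    have hlink : ∀ i, i < 1 → G.Adj ((fun i => if i = 0 then T else v) i)
        ((fun i => if i = 0 then T else v) (i+1)) := by
      intro i hi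
      have : i = 0 := by omega
      subst this
      simpa using hadj
    set ω : ChainGraph.Route G := ⟨1, fun i => if i = 0 then T else v, hlink⟩ with hω
    apply hsep ω
    · left
      constructor
      · show (if (0:ℕ) = 0 then T else v) ∈ ({T} : Set V)
        simp
      · show (if (1:ℕ) = 0 then T else v) ∈ Set.univ \ ({T} ∪ S)
        refine ⟨trivial, ?_⟩
        rintro (h | h)
        · exact hvT (by simpa using h)
        · exact hvS (by simpa using h)
    · exact ω.active_single S rfl (by simp [hω]) (by simp [hω]) hTS hvS
  have hchS : G.ch T ⊆ S := fun v hv => hadjS v (Or.inl hv)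
  intro v hvmb
  by_contra hvS
  have hvmb' := hvmb
  simp only [ChainGraph.mb, Set.mem_union, ChainGraph.pa, ChainGraph.nb, ChainGraph.ch,
    ChainGraph.csp, Set.mem_setOf_eq] at hvmb'
  rcases hvmb' with ((h | h) | h) | h
  · exact hvS (hadjS v (Or.inr (Or.inl h)))
  · exact hvS (hadjS v (Or.inr (Or.inr (G.undir_symm'' h))))
  · exact hvS (hadjS v (Or.inl h))
  · obtain ⟨n, ρ, hn, h0, hn1, hinj, hcd1, hcdn, hcund, _⟩ := h
    have hvT : v ≠ T := by
      intro h
      exact hinj 0 (n+1) (by omega) (le_refl _) (by omega) (h0.trans (h ▸ hn1).symm)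
    have hlink : ∀ i, i < n+1 → G.Adj (ρ i) (ρ (i+1)) := by
      intro i hi
      rcases Nat.eq_zero_or_pos i with hz | hz
      · subst hz
        rw [h0]
        exact Or.inl hcd1
      · by_cases hin : i = n
        · subst hin
          rw [hn1]
          exact Or.inr (Or.inl hcdn)
        · exact Or.inr (Or.inr (hcund i hz (by omega)))
    set ω : ChainGraph.Route G := ⟨n+1, ρ, hlink⟩ with hω
    apply hsep ω
    · left
      constructor
      · show ρ 0 ∈ ({T} : Set V)
        simp [h0]
      · show ρ (n+1) ∈ Set.univ \ ({T} ∪ S)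
        refine ⟨trivial, ?_⟩
        rintro (h | h)
        · exact hvT (hn1 ▸ h)
        · exact hvS (hn1 ▸ h)
    · exact ω.active_complex S rfl hn h0 hn1 hcd1 hcdn hcund
        (hchS (show ρ 1 ∈ G.ch T from hcd1)) hTS hvS

end LWF
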